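/- Let G × X → X be a continuous action of a second countable locally compact group G on a Hausdorff space X, and x₀ ∈ X with orbit O = G·x₀. If there exist a compact neighborhood K of the identity in G and a neighborhood V of x₀ in X with V ∩ O ⊆ K·x₀, then O is locally compact in its relative topology. -/

import Mathlib

open scoped Pointwise


/-- If there exist a compact neighborhood `K` of the identity and a neighborhood
`V` of `x₀` with `V ∩ (G·x₀) ⊆ K·x₀`, then the orbit `G·x₀` is locally compact
in its relative topology. -/
theorem stmt5 {G X : Type*} [Group G] [TopologicalSpace G] [IsTopologicalGroup G]
    [LocallyCompactSpace G] [SecondCountableTopology G]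
    [TopologicalSpace X] [T2Space X] [MulAction G X] [ContinuousSMul G X]
    (x₀ : X) (K : Set G) (hK : K ∈ nhds (1 : G)) (hKc : IsCompact K)
    (V : Set X) (hV : V ∈ nhds x₀)
    (hVK : V ∩ MulAction.orbit G x₀ ⊆ (fun g => g • x₀) '' K) :
    LocallyCompactSpace ↥(MulAction.orbit G x₀) := by
  have hwlc : WeaklyLocallyCompactSpace ↥(MulAction.orbit G x₀) := by
    constructor
    intro y
    obtain ⟨g, hg⟩ := y.2
    set S : Set X := (fun k => (g * k) • x₀) '' K with hS
    have hScomp : IsCompact S :=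
      hKc.image (by fun_prop)
    have hSsub : S ⊆ MulAction.orbit G x₀ := by
      rintro _ ⟨k, -, rfl⟩; exact MulAction.mem_orbit _ _
    refine ⟨Subtype.val ⁻¹' S, ?_, ?_⟩
    · rw [Topology.IsEmbedding.subtypeVal.isCompact_iff, Subtype.image_preimage_coe,
        Set.inter_eq_right.mpr hSsub]
      exact hScomp
    · have hgv : g • V ∈ nhds ((y : X)) := by
        rw [show (y : X) = g • x₀ from hg.symm]
        exact smul_mem_nhds_smul g hV
      have hsub : (Subtype.val ⁻¹' (g • V) : Set ↥(MulAction.orbit G x₀)) ⊆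
          Subtype.val ⁻¹' S := by
        intro z hz
        have hz1 : g⁻¹ • (z : X) ∈ V := by
          obtain ⟨v, hv, hvz⟩ := hz
          rwa [← hvz, inv_smul_smul]
        have hz2 : g⁻¹ • (z : X) ∈ MulAction.orbit G x₀ := by
          obtain ⟨h, hh⟩ := z.2
          exact ⟨g⁻¹ * h, by simp only [mul_smul]; rw [show h • x₀ = (z : X) from hh]⟩
        obtain ⟨k, hk, hkx⟩ := hVK ⟨hz1, hz2⟩
        refine ⟨k, hk, ?_⟩
        simp only [mul_smul, hkx, smul_inv_smul]
      exact Filter.mem_of_superset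
        ((continuous_subtype_val.continuousAt).preimage_mem_nhds hgv) hsub
  infer_instance
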